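/- Let ζ be a complex number with |ζ| = 1. The quantity |1/4 + (-1)ᵏ/4 + (1/2)ζᵏ| equals 1/2 for all k ∈ {1,2,3,4,5} if and only if ζ is a primitive cube root or a primitive sixth root of unity. -/

import Mathlib

open Complex

lemma aux18 (w : ℂ) (hw : ‖w‖ = 1) :
    ‖(1 : ℂ)/2 + w/2‖ = 1/2 ↔ w^2 + w + 1 = 0 := by
  have hw0 : w ≠ 0 := by
    intro h; rw [h] at hw; simp at hw
  have hconj : (starRingEnd ℂ) w = w⁻¹ := (Complex.inv_eq_conj hw).symm
  have h2 : ((1 : ℂ)/2 + w/2) = (1 + w)/2 := by ring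
  have habs2 : ‖(1 : ℂ)/2 + w/2‖ = ‖1 + w‖ / 2 := by
    rw [h2, norm_div]; norm_num
  rw [habs2]
  have step1 : ‖1 + w‖ / 2 = 1/2 ↔ ‖1 + w‖ = 1 := by
    constructor <;> intro h <;> linarith
  rw [step1]
  have step2 : ‖1 + w‖ = 1 ↔ Complex.normSq (1 + w) = 1 := by
    rw [← Complex.sq_norm]
    constructor
    · intro h; rw [h]; norm_num
    · intro h; nlinarith [norm_nonneg (1 + w)]
  rw [step2]
  have step3 : Complex.normSq (1 + w) = 1 ↔
      ((1 + w) * (starRingEnd ℂ) (1 + w) : ℂ) = 1 := by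
    rw [Complex.mul_conj]
    exact_mod_cast Iff.rfl.symm
  rw [step3, map_add, map_one, hconj]
  constructor
  · intro h
    have h' : (1 + w) * (w + 1) = w := by
      field_simp at h
      linear_combination h
    linear_combination h'
  · intro h
    field_simp
    linear_combination h

theorem stmt18 (ζ : ℂ) (hζ : ‖ζ‖ = 1) :
    (∀ k : ℕ, 1 ≤ k → k ≤ 5 →
        ‖(1 / 4 : ℂ) + (-1 : ℂ) ^ k / 4 + ζ ^ k / 2‖ = 1 / 2) ↔
      ((ζ ^ 3 = 1 ∧ ∀ m : ℕ, 0 < m → m < 3 → ζ ^ m ≠ 1) ∨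
        (ζ ^ 6 = 1 ∧ ∀ m : ℕ, 0 < m → m < 6 → ζ ^ m ≠ 1)) := by
  have habsk : ∀ k : ℕ, ‖ζ ^ k‖ = 1 := by
    intro k; rw [norm_pow, hζ, one_pow]
  have hodd : ∀ k : ℕ, Odd k →
      ‖(1 / 4 : ℂ) + (-1 : ℂ) ^ k / 4 + ζ ^ k / 2‖ = 1 / 2 := by
    intro k hk
    rw [hk.neg_one_pow]
    have he : (1 / 4 : ℂ) + (-1 : ℂ) / 4 + ζ ^ k / 2 = ζ ^ k / 2 := by ring
    rw [he, norm_div, habsk]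
    norm_num
  constructor
  · intro h
    have h2 := h 2 (by norm_num) (by norm_num)
    have h2' : ‖(1 : ℂ)/2 + ζ ^ 2 / 2‖ = 1/2 := by
      have he : (1 : ℂ)/2 + ζ ^ 2 / 2 = (1/4 : ℂ) + (-1 : ℂ)^2/4 + ζ^2/2 := by
        norm_num
      rw [he]; exact h2
    have hEq : (ζ ^ 2) ^ 2 + ζ ^ 2 + 1 = 0 := (aux18 (ζ ^ 2) (habsk 2)).mp h2'
    have h6 : ζ ^ 6 = 1 := by linear_combination (ζ ^ 2 - 1) * hEq
    have hne2 : ζ ^ 2 ≠ 1 := by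
      intro he
      rw [he] at hEq
      norm_num at hEq
    by_cases h3 : ζ ^ 3 = 1
    · left
      refine ⟨h3, fun m hm1 hm2 => ?_⟩
      interval_cases m
      · intro h1
        exact hne2 (by rw [pow_one] at h1; rw [h1]; norm_num)
      · exact hne2
    · right
      refine ⟨h6, fun m hm1 hm2 => ?_⟩
      interval_cases m
      · intro h1
        rw [pow_one] at h1
        exact h3 (by rw [h1]; norm_num)
      · exact hne2
      · exact h3
      · intro h4
        exact hne2 (by linear_combination h6 - ζ ^ 2 * h4)
      · intro h5
        have h1 : ζ = 1 := by linear_combination h6 - ζ * h5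
        exact h3 (by rw [h1]; norm_num)
  · intro hcase
    have key : ζ ^ 6 = 1 ∧ ζ ^ 2 ≠ 1 := by
      rcases hcase with ⟨h3, hm⟩ | ⟨h6, hm⟩
      · exact ⟨by linear_combination (ζ ^ 3 + 1) * h3, hm 2 (by norm_num) (by norm_num)⟩
      · exact ⟨h6, hm 2 (by norm_num) (by norm_num)⟩
    obtain ⟨h6, hne2⟩ := key
    have heq : ζ ^ 4 + ζ ^ 2 + 1 = 0 := by
      have hfac : (ζ ^ 2 - 1) * (ζ ^ 4 + ζ ^ 2 + 1) = 0 := by linear_combination h6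
      rcases mul_eq_zero.mp hfac with hc | hc
      · exact absurd (by linear_combination hc) hne2
      · exact hc
    intro k hk1 hk5
    interval_cases k
    · exact hodd 1 (by norm_num)
    · have he : (1 / 4 : ℂ) + (-1 : ℂ)^2/4 + ζ^2/2 = (1 : ℂ)/2 + ζ ^ 2 / 2 := by
        norm_num
      rw [he]
      exact (aux18 (ζ ^ 2) (habsk 2)).mpr (by linear_combination heq)
    · exact hodd 3 ⟨1, rfl⟩
    · have he : (1 / 4 : ℂ) + (-1 : ℂ)^4/4 + ζ^4/2 = (1 : ℂ)/2 + ζ ^ 4 / 2 := by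
        norm_num
      rw [he]
      exact (aux18 (ζ ^ 4) (habsk 4)).mpr (by linear_combination heq + ζ ^ 2 * h6)
    · exact hodd 5 ⟨2, rfl⟩
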